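/- Hamming bound for non-degenerate DS codes: if a non-degenerate DS code with quantum length n, quantum dimension k, and minimum distance d = 2t+1 exists (so that all pairs (e,z) with wt(e) + wt(z) ≤ t have distinct syndromes modulo nothing, i.e., the 2^{n-k} syndromes must distinguish all such error patterns), then Σ_{i=0}^{t} C(n,i) 3^i Σ_{j=0}^{t-i} C(n-k, j) ≤ 2^{n-k}, equivalently 2^{2n} ≤ 4^n 2^{n-k} / Σ_{i=0}^{t} C(n,i) 3^i Σ_{j=0}^{t-i} C(n-k, j). -/

import Mathlib

open Finset

noncomputable section

abbrev F2 := ZMod 2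
abbrev F4 := GaloisField 2 2

/-- Trace from `F4` to `F2`. -/
def trF : F4 →ₗ[F2] F2 := Algebra.trace F2 F4

/-- Hamming weight of a vector. -/
def wt {α : Type*} [Zero α] {N : ℕ} (x : Fin N → α) : ℕ := Nat.card {i // x i ≠ 0}

/-- Hermitian trace inner product on `F4^n`. -/
def ipD {n : ℕ} (x y : Fin n → F4) : F2 := trF (∑ i, x i * (y i) ^ 2)

/-- Mixed inner product on `F4^n × F2^m`. -/
def ipDS {n m : ℕ} (x y : (Fin n → F4) × (Fin m → F2)) : F2 :=
  ipD x.1 y.1 + ∑ j, x.2 j * y.2 j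

/-- The F2-row space of `H` inside `F4^n`. -/
def rowSpanF2 {n m : ℕ} (H : Fin m → Fin n → F4) : Set (Fin n → F4) :=
  {v | ∃ u : Fin m → F2, v = fun i => ∑ r, algebraMap F2 F4 (u r) * H r i}

/-- The data-syndrome code generated by the rows of `[H | I_m]`. -/
def CDS {n m : ℕ} (H : Fin m → Fin n → F4) : Set ((Fin n → F4) × (Fin m → F2)) :=
  {w | ∃ u : Fin m → F2, w = (fun i => ∑ r, algebraMap F2 F4 (u r) * H r i, u)}

/-- Dual with respect to the mixed inner product. -/
def dualDS {n m : ℕ} (D : Set ((Fin n → F4) × (Fin m → F2))) :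
    Set ((Fin n → F4) × (Fin m → F2)) :=
  {v | ∀ w ∈ D, ipDS w v = 0}

/-- Split weight enumerator. -/
def Bwt {n m : ℕ} (D : Set ((Fin n → F4) × (Fin m → F2))) (i j : ℕ) : ℕ :=
  Nat.card {w : (Fin n → F4) × (Fin m → F2) // w ∈ D ∧ wt w.1 = i ∧ wt w.2 = j}

/-- q-ary Krawtchouk polynomial `K_t(x; N, q)` evaluated at integer `x`. -/
def kraw (t x N q : ℕ) : ℚ :=
  ∑ s ∈ Finset.range (t + 1),
    (-1 : ℚ) ^ s * ((q : ℚ) - 1) ^ (t - s) * (x.choose s) * ((N - x).choose (t - s))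

section Aux
variable {α : Type*} [Fintype α] [DecidableEq α] [Zero α] {N : ℕ}
set_option linter.unusedSectionVars false

lemma wt_eq' (x : Fin N → α) : wt x = (univ.filter fun j => x j ≠ 0).card := by
  rw [wt, Nat.card_eq_fintype_card, Fintype.card_subtype]

lemma card_fiber (s : Finset (Fin N)) :
    Fintype.card {x : Fin N → α // ∀ j, x j ≠ 0 ↔ j ∈ s} =
      (Fintype.card α - 1) ^ s.card := by
  have e : {x : Fin N → α // ∀ j, x j ≠ 0 ↔ j ∈ s} ≃ (∀ _ : s, {a : α // a ≠ 0}) :=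
    { toFun := fun x j => ⟨x.1 j, (x.2 j).mpr j.2⟩
      invFun := fun f => ⟨fun j => if h : j ∈ s then (f ⟨j, h⟩).1 else 0, by
        intro j
        constructor
        · intro h
          by_contra hn
          simp [dif_neg hn] at h
        · intro h
          simp only [dif_pos h]
          exact (f ⟨j, h⟩).2⟩
      left_inv := fun x => by
        ext j
        by_cases h : j ∈ s
        · simp [dif_pos h]
        · simp only [dif_neg h]
          by_contra hn
          exact h ((x.2 j).mp (Ne.symm hn))
      right_inv := fun f => by
        ext j
        simp [dif_pos j.2] }
  rw [Fintype.card_congr e, Fintype.card_pi]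
  have : Fintype.card {a : α // a ≠ 0} = Fintype.card α - 1 := by
    have := Fintype.card_subtype_compl (fun a : α => a = 0)
    simpa [Fintype.card_subtype_eq] using this
  simp [this, Finset.prod_const, Finset.card_univ, Fintype.card_coe]

lemma card_wt_eq (i : ℕ) :
    (univ.filter fun x : Fin N → α => wt x = i).card =
      N.choose i * (Fintype.card α - 1) ^ i := by
  rw [Finset.card_eq_sum_card_fiberwise
    (f := fun x : Fin N → α => univ.filter fun j => x j ≠ 0)
    (t := Finset.powersetCard i univ)
    (by intro x hx
        simp only [Finset.mem_coe, mem_filter, mem_univ, true_and] at hx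
        rw [Finset.mem_coe, Finset.mem_powersetCard]
        exact ⟨Finset.subset_univ _, by rw [← wt_eq', hx]⟩)]
  have hfib : ∀ b ∈ Finset.powersetCard i (univ : Finset (Fin N)),
      ((univ.filter fun x : Fin N → α => wt x = i).filter
        (fun x => univ.filter (fun j => x j ≠ 0) = b)).card =
        (Fintype.card α - 1) ^ i := by
    intro b hb
    rw [Finset.mem_powersetCard] at hb
    have h1 : ((univ.filter fun x : Fin N → α => wt x = i).filter
        (fun x => univ.filter (fun j => x j ≠ 0) = b)) =
        univ.filter (fun x : Fin N → α => ∀ j, x j ≠ 0 ↔ j ∈ b) := by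
      ext x
      simp only [mem_filter, mem_univ, true_and]
      constructor
      · rintro ⟨-, h⟩ j
        rw [← h]; simp
      · intro h
        have hb2 : univ.filter (fun j => x j ≠ 0) = b := by
          ext j; simp [h j]
        exact ⟨by rw [wt_eq', hb2, hb.2], hb2⟩
    rw [h1, ← Fintype.card_subtype, card_fiber, hb.2]
  rw [Finset.sum_congr rfl hfib, Finset.sum_const, Finset.card_powersetCard,
    Finset.card_univ, Fintype.card_fin, smul_eq_mul]

lemma card_wt_le (m : ℕ) :
    (univ.filter fun x : Fin N → α => wt x ≤ m).card =
      ∑ j ∈ Finset.range (m + 1), N.choose j * (Fintype.card α - 1) ^ j := by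
  rw [Finset.card_eq_sum_card_fiberwise (f := fun x : Fin N → α => wt x)
    (t := Finset.range (m + 1))
    (by intro x hx
        simp only [Finset.mem_coe, mem_filter, mem_univ, true_and] at hx
        rw [Finset.mem_coe, Finset.mem_range]
        exact Nat.lt_succ_of_le hx)]
  refine Finset.sum_congr rfl fun j hj => ?_
  rw [Finset.mem_range] at hj
  rw [Finset.filter_filter, ← card_wt_eq j]
  congr 1
  apply Finset.filter_congr
  intro x _
  constructor
  · rintro ⟨-, h⟩; exact h
  · intro h; exact ⟨by omega, h⟩

end Aux

instance : Fintype F4 := Fintype.ofFinite _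

lemma cardF4 : Fintype.card F4 = 4 := by
  rw [← Nat.card_eq_fintype_card, GaloisField.card 2 2 (by norm_num)]
  norm_num

lemma cardF2 : Fintype.card F2 = 2 := by simp


/-- Hamming bound for non-degenerate DS codes of minimum distance
`d = 2t+1`: the syndrome map is injective on errors of combined weight `≤ t`,
hence the sphere-packing inequality holds. -/
theorem stmt9 (n k t : ℕ) (hk : k ≤ n) (H : Fin (n - k) → Fin n → F4)
    (hinj : Set.InjOn
      (fun ez : (Fin n → F4) × (Fin (n - k) → F2) =>
        (fun r => ipD (H r) ez.1 + ez.2 r : Fin (n - k) → F2))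
      {ez | wt ez.1 + wt ez.2 ≤ t}) :
    ∑ i ∈ Finset.range (t + 1),
      n.choose i * 3 ^ i * (∑ j ∈ Finset.range (t - i + 1), (n - k).choose j)
      ≤ 2 ^ (n - k) := by
  classical
  set T : Finset ((Fin n → F4) × (Fin (n - k) → F2)) :=
    univ.filter (fun ez => wt ez.1 + wt ez.2 ≤ t) with hT
  have hcard : T.card ≤ 2 ^ (n - k) := by
    have h1 := Finset.card_le_card_of_injOn
      (f := fun ez : (Fin n → F4) × (Fin (n - k) → F2) =>
        (fun r => ipD (H r) ez.1 + ez.2 r : Fin (n - k) → F2))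
      (s := T) (t := univ)
      (fun _ _ => mem_univ _)
      (fun a ha b hb hab => hinj (by simpa [hT] using ha) (by simpa [hT] using hb) hab)
    calc T.card ≤ (univ : Finset (Fin (n - k) → F2)).card := h1
    _ = 2 ^ (n - k) := by simp [Finset.card_univ]
  refine le_trans (le_of_eq ?_) hcard
  rw [Finset.card_eq_sum_card_fiberwise (f := fun ez => wt ez.1) (t := range (t + 1))
    (by intro x hx
        simp only [hT, Finset.mem_coe, mem_filter, mem_univ, true_and] at hx
        rw [Finset.mem_coe, Finset.mem_range]
        simp only []
        omega)]
  refine Finset.sum_congr rfl fun i hi => ?_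
  rw [Finset.mem_range] at hi
  have h2 : T.filter (fun ez => wt ez.1 = i) =
      (univ.filter (fun e : Fin n → F4 => wt e = i)) ×ˢ
      (univ.filter (fun z : Fin (n - k) → F2 => wt z ≤ t - i)) := by
    rw [hT, Finset.filter_filter, ← Finset.filter_product]
    ext x
    simp only [mem_filter, mem_univ, true_and, Finset.mem_product, and_self]
    omega
  rw [h2, Finset.card_product, card_wt_eq, card_wt_le, cardF4, cardF2]
  simp
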